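/- For σ > 0, the function g₀(n) = (1+σ)/n + σn + exp((1+σ)/2 − (1+σ)/(2n²) − σ ln n) is strictly decreasing on (1, √((1+σ)/σ)); consequently g₀(n) < g₀(1) for all n ∈ (1, √((1+σ)/σ)). -/

import Mathlib

open Real

private lemma deriv_aux14 (σ x : ℝ) (hx : 0 < x) :
    HasDerivAt (fun n : ℝ => (1 + σ) / n + σ * n
        + Real.exp ((1 + σ) / 2 - (1 + σ) / (2 * n ^ 2) - σ * Real.log n))
      (-(1+σ)/x^2 + σ + Real.exp ((1 + σ) / 2 - (1 + σ) / (2 * x ^ 2) - σ * Real.log x) * ((1+σ)/x^3 - σ/x)) x := by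
  have hx2 : (2:ℝ) * x ^ 2 ≠ 0 := by positivity
  have t1 : HasDerivAt (fun n : ℝ => (1 + σ) / n)
      ((0 * x - (1+σ) * 1) / x ^ 2) x :=
    (hasDerivAt_const x (1+σ)).div (hasDerivAt_id x) hx.ne'
  have t2 : HasDerivAt (fun n : ℝ => σ * n) (σ * 1) x := (hasDerivAt_id x).const_mul σ
  have hden : HasDerivAt (fun n : ℝ => 2 * n ^ 2) (2 * (2 * x ^ 1)) x :=
    (hasDerivAt_pow 2 x).const_mul 2
  have u2 : HasDerivAt (fun n : ℝ => (1 + σ) / (2 * n ^ 2))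
      ((0 * (2 * x ^ 2) - (1+σ) * (2 * (2 * x ^ 1))) / (2 * x ^ 2) ^ 2) x :=
    (hasDerivAt_const x (1+σ)).div hden hx2
  have u3 : HasDerivAt (fun n : ℝ => σ * Real.log n) (σ * x⁻¹) x :=
    (Real.hasDerivAt_log hx.ne').const_mul σ
  have u : HasDerivAt (fun n : ℝ => (1 + σ) / 2 - (1 + σ) / (2 * n ^ 2) - σ * Real.log n)
      (0 - ((0 * (2 * x ^ 2) - (1+σ) * (2 * (2 * x ^ 1))) / (2 * x ^ 2) ^ 2) - σ * x⁻¹) x :=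
    ((hasDerivAt_const x _).sub u2).sub u3
  have total := (t1.add t2).add u.exp
  refine total.congr_deriv ?_
  field_simp
  ring

theorem stmt_14 (σ : ℝ) (hσ : 0 < σ)
    (g₀ : ℝ → ℝ)
    (hg₀ : ∀ n : ℝ, 0 < n →
      g₀ n = (1 + σ) / n + σ * n
        + Real.exp ((1 + σ) / 2 - (1 + σ) / (2 * n ^ 2) - σ * Real.log n)) :
    StrictAntiOn g₀ (Set.Ioo 1 (Real.sqrt ((1 + σ) / σ))) ∧
    ∀ n ∈ Set.Ioo (1 : ℝ) (Real.sqrt ((1 + σ) / σ)), g₀ n < g₀ 1 := by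
  set R := Real.sqrt ((1 + σ) / σ) with hR
  set f : ℝ → ℝ := fun n => (1 + σ) / n + σ * n
        + Real.exp ((1 + σ) / 2 - (1 + σ) / (2 * n ^ 2) - σ * Real.log n) with hf
  -- strict antitonicity of f on the closed interval
  have key : StrictAntiOn f (Set.Icc 1 R) := by
    apply strictAntiOn_of_deriv_neg (convex_Icc 1 R)
    · intro x hx
      exact (deriv_aux14 σ x (lt_of_lt_of_le one_pos hx.1)).continuousAt.continuousWithinAt
    · intro x hx
      rw [interior_Icc] at hx
      obtain ⟨hx1, hxR⟩ := hx
      have hx0 : (0:ℝ) < x := lt_trans one_pos hx1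
      rw [(deriv_aux14 σ x hx0).deriv]
      -- x^2 < (1+σ)/σ
      have hsq : x ^ 2 < (1 + σ) / σ := by
        have h1 : x ^ 2 < R ^ 2 := by
          have := pow_lt_pow_left₀ hxR hx0.le (n := 2) two_ne_zero
          exact this
        have h2 : R ^ 2 = (1 + σ) / σ := Real.sq_sqrt (by positivity)
        linarith
      have hA : 0 < (1 + σ) / x ^ 2 - σ := by
        have hmul : x ^ 2 * σ < 1 + σ := (lt_div_iff₀ hσ).mp hsq
        have := (lt_div_iff₀ (pow_pos hx0 2)).mpr (by linarith : σ * x ^ 2 < 1 + σ)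
        linarith
      -- exp bound: exponent < log x
      have hlog : 1 - 1 / x < Real.log x := by
        have h := Real.log_lt_sub_one_of_pos (inv_pos.mpr hx0) (by
          intro h
          rw [inv_eq_one] at h
          exact absurd h (ne_of_gt hx1))
        rw [Real.log_inv] at h
        have : x⁻¹ = 1 / x := inv_eq_one_div x
        linarith [this ▸ h]
      have hhalf : 1 / 2 - 1 / (2 * x ^ 2) < Real.log x := by
        have hq : 1 - 1 / x - (1 / 2 - 1 / (2 * x ^ 2)) = (1 - 1 / x) ^ 2 / 2 := by
          field_simp
          ring
        nlinarith [sq_nonneg (1 - 1 / x)]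
      have hux : (1 + σ) / 2 - (1 + σ) / (2 * x ^ 2) - σ * Real.log x < Real.log x := by
        have h1p : (0:ℝ) < 1 + σ := by linarith
        have := mul_lt_mul_of_pos_left hhalf h1p
        have hexp : (1 + σ) * (1 / 2 - 1 / (2 * x ^ 2)) = (1 + σ) / 2 - (1 + σ) / (2 * x ^ 2) := by
          field_simp
        nlinarith
      have hE : Real.exp ((1 + σ) / 2 - (1 + σ) / (2 * x ^ 2) - σ * Real.log x) < x := by
        calc Real.exp ((1 + σ) / 2 - (1 + σ) / (2 * x ^ 2) - σ * Real.log x)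
            < Real.exp (Real.log x) := Real.exp_lt_exp.mpr hux
          _ = x := Real.exp_log hx0
      set E := Real.exp ((1 + σ) / 2 - (1 + σ) / (2 * x ^ 2) - σ * Real.log x) with hEdef
      have hEpos : 0 < E := Real.exp_pos _
      have hB : (1 + σ) / x ^ 3 - σ / x = ((1 + σ) / x ^ 2 - σ) / x := by
        field_simp
      rw [hB]
      have hAx : 0 < ((1 + σ) / x ^ 2 - σ) / x := div_pos hA hx0
      have h1 : E * (((1 + σ) / x ^ 2 - σ) / x) < x * (((1 + σ) / x ^ 2 - σ) / x) :=
        mul_lt_mul_of_pos_right hE hAx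
      have h2 : x * (((1 + σ) / x ^ 2 - σ) / x) = (1 + σ) / x ^ 2 - σ := by
        field_simp
      rw [h2] at h1
      clear_value E
      have key2 : -(1 + σ) / x ^ 2 + σ + E * (((1 + σ) / x ^ 2 - σ) / x)
          = E * (((1 + σ) / x ^ 2 - σ) / x) - ((1 + σ) / x ^ 2 - σ) := by ring
      rw [key2]
      linarith
  have hfg : ∀ n ∈ Set.Icc (1:ℝ) R, g₀ n = f n := fun n hn =>
    hg₀ n (lt_of_lt_of_le one_pos hn.1)
  constructor
  · intro a ha b hb hab
    have ha' : a ∈ Set.Icc (1:ℝ) R := ⟨ha.1.le, ha.2.le⟩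
    have hb' : b ∈ Set.Icc (1:ℝ) R := ⟨hb.1.le, hb.2.le⟩
    rw [hfg a ha', hfg b hb']
    exact key ha' hb' hab
  · intro n hn
    have h1R : (1:ℝ) ≤ R := le_of_lt (lt_trans hn.1 hn.2)
    have h1' : (1:ℝ) ∈ Set.Icc (1:ℝ) R := ⟨le_refl 1, h1R⟩
    have hn' : n ∈ Set.Icc (1:ℝ) R := ⟨hn.1.le, hn.2.le⟩
    rw [hfg n hn', hfg 1 h1']
    exact key h1' hn' hn.1
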